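/- A minimal action Φ of a group Γ on a Cantor metric space 𝔛 is equicontinuous if and only if for every clopen subset U ⊆ 𝔛, the orbit {Φ(g)(U) | g ∈ Γ} of U under the induced action on the collection of clopen subsets of 𝔛 is finite. -/

import Mathlib

set_option linter.unusedVariables false

open Pointwise Metric Set

private lemma clopen_margin {X : Type*} [MetricSpace X] [CompactSpace X] {S : Set X}
    (hS : IsClopen S) : ∃ δ > (0:ℝ), ∀ x ∈ S, ∀ y ∉ S, δ ≤ dist x y := by
  rcases S.eq_empty_or_nonempty with rfl | hne
  · exact ⟨1, one_pos, by simp⟩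
  rcases Sᶜ.eq_empty_or_nonempty with hc | hcne
  · refine ⟨1, one_pos, fun x _ y hy => absurd (?_ : y ∈ Sᶜ) (by simp [hc])⟩
    exact hy
  obtain ⟨x₀, hx₀, hmin⟩ := hS.isClosed.isCompact.exists_isMinOn hne
    (continuous_infDist_pt Sᶜ).continuousOn
  refine ⟨infDist x₀ Sᶜ, ?_, fun x hx y hy => ?_⟩
  · exact (hS.isOpen.isClosed_compl.notMem_iff_infDist_pos hcne).1 (by simpa using hx₀)
  · exact le_trans (hmin hx) (infDist_le_dist_of_mem hy)

private lemma margin_family_finite {X : Type*} [MetricSpace X] [CompactSpace X] {δ : ℝ}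
    (hδ : 0 < δ) : {S : Set X | ∀ x ∈ S, ∀ y ∉ S, δ ≤ dist x y}.Finite := by
  obtain ⟨F, -, hFfin, hFcov⟩ :=
    (isCompact_univ : IsCompact (Set.univ : Set X)).finite_cover_balls (half_pos hδ)
  have key : ∀ S ∈ {S : Set X | ∀ x ∈ S, ∀ y ∉ S, δ ≤ dist x y}, ∀ x,
      x ∈ S ↔ ∃ p ∈ F ∩ S, dist x p < δ/2 := by
    intro S hS x
    constructor
    · intro hx
      obtain ⟨p, hp, hxp⟩ : ∃ p ∈ F, x ∈ ball p (δ/2) := by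
        simpa using hFcov (mem_univ x)
      rw [mem_ball] at hxp
      have hpS : p ∈ S := by
        by_contra hpn
        exact absurd hxp (not_lt.2 (le_trans (by linarith) (hS x hx p hpn)))
      exact ⟨p, ⟨hp, hpS⟩, hxp⟩
    · rintro ⟨p, ⟨hpF, hpS⟩, hxp⟩
      by_contra hxn
      exact absurd hxp (not_lt.2 (le_trans (by linarith) (dist_comm x p ▸ hS p hpS x hxn)))
  have hinj : InjOn (fun S => F ∩ S) {S : Set X | ∀ x ∈ S, ∀ y ∉ S, δ ≤ dist x y} := by
    intro S hS T hT hST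
    ext x
    rw [key S hS x, key T hT x, show F ∩ S = F ∩ T from hST]
  refine Set.Finite.of_finite_image ?_ hinj
  exact hFfin.finite_subsets.subset (by rintro _ ⟨S, -, rfl⟩; exact inter_subset_left)

private lemma isClopen_smul {X : Type*} [TopologicalSpace X] {G : Type*} [Group G]
    [MulAction G X] (hc : ∀ g : G, Continuous fun x : X => g • x) {U : Set X}
    (hU : IsClopen U) (g : G) : IsClopen (g • U) := by
  have : g • U = (fun x : X => g⁻¹ • x) ⁻¹' U := by
    ext x; simp [Set.mem_smul_set_iff_inv_smul_mem]
  rw [this]; exact hU.preimage (hc g⁻¹)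

private lemma finite_common_margin {X : Type*} [MetricSpace X] [CompactSpace X]
    {𝒮 : Set (Set X)} (hfin : 𝒮.Finite) (hcl : ∀ S ∈ 𝒮, IsClopen S) :
    ∃ δ > (0:ℝ), ∀ S ∈ 𝒮, ∀ x ∈ S, ∀ y ∉ S, δ ≤ dist x y := by
  revert hcl
  refine Set.Finite.induction_on (motive := fun 𝒮 _ => (∀ S ∈ 𝒮, IsClopen S) →
    ∃ δ > (0:ℝ), ∀ S ∈ 𝒮, ∀ x ∈ S, ∀ y ∉ S, δ ≤ dist x y) _ hfin (fun _ => ⟨1, one_pos, by simp⟩) ?_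
  intro S 𝒯 _ _ ih hcl
  obtain ⟨δ₂, hδ₂, h₂⟩ := ih (fun T hT => hcl T (Set.mem_insert_of_mem _ hT))
  obtain ⟨δ₁, hδ₁, h₁⟩ := clopen_margin (hcl S (Set.mem_insert _ _))
  refine ⟨min δ₁ δ₂, lt_min hδ₁ hδ₂, fun T hT => ?_⟩
  rcases hT with rfl | hT
  · exact fun x hx y hy => le_trans (min_le_left _ _) (h₁ x hx y hy)
  · exact fun x hx y hy => le_trans (min_le_right _ _) (h₂ T hT x hx y hy)

theorem stmt3 {X : Type*} [MetricSpace X] [CompactSpace X]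
    [TotallyDisconnectedSpace X] (hperf : Perfect (Set.univ : Set X))
    {G : Type*} [Group G] [MulAction G X]
    (hc : ∀ g : G, Continuous fun x : X => g • x)
    (hmin : ∀ x : X, Dense (MulAction.orbit G x)) :
    (∀ ε > (0 : ℝ), ∃ δ > (0 : ℝ), ∀ x y : X, dist x y < δ →
        ∀ g : G, dist (g • x) (g • y) < ε) ↔
      ∀ U : Set X, IsClopen U → (MulAction.orbit G U).Finite := by
  constructor
  · intro hequi U hU
    obtain ⟨δ, hδ, hmar⟩ := clopen_margin hU
    obtain ⟨δ', hδ', hδ'equi⟩ := hequi δ hδ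
    refine (margin_family_finite hδ').subset ?_
    rintro S hS
    obtain ⟨g, rfl⟩ := MulAction.mem_orbit_iff.1 hS
    intro x hx y hy
    by_contra hlt
    push_neg at hlt
    have h1 : g⁻¹ • x ∈ U := by rwa [← Set.mem_smul_set_iff_inv_smul_mem]
    have h2 : g⁻¹ • y ∉ U := by rwa [← Set.mem_smul_set_iff_inv_smul_mem]
    exact absurd (hδ'equi x y hlt g⁻¹) (not_lt.2 (hmar _ h1 _ h2))
  · intro hfin ε hε
    -- clopen neighborhoods of small diameter
    have hV : ∀ x : X, ∃ V : Set X, IsClopen V ∧ x ∈ V ∧ V ⊆ ball x (ε/3) :=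
      fun x => compact_exists_isClopen_in_isOpen isOpen_ball (mem_ball_self (by linarith))
    choose V hVcl hVmem hVsub using hV
    obtain ⟨t, ht⟩ := (isCompact_univ : IsCompact (Set.univ : Set X)).elim_finite_subcover
      (fun x => V x) (fun x => (hVcl x).isOpen) (fun x _ => Set.mem_iUnion.2 ⟨x, hVmem x⟩)
    set 𝒮 : Set (Set X) := ⋃ p ∈ t, MulAction.orbit G (V p) with h𝒮
    have h𝒮fin : 𝒮.Finite := Set.Finite.biUnion t.finite_toSet (fun p _ => hfin _ (hVcl p))
    have h𝒮cl : ∀ S ∈ 𝒮, IsClopen S := by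
      rintro S hS
      obtain ⟨p, -, hSp⟩ := Set.mem_iUnion₂.1 hS
      obtain ⟨g, rfl⟩ := MulAction.mem_orbit_iff.1 hSp
      exact isClopen_smul hc (hVcl p) g
    obtain ⟨δ, hδ, hmar⟩ := finite_common_margin h𝒮fin h𝒮cl
    refine ⟨δ, hδ, fun x y hxy g => ?_⟩
    obtain ⟨p, hpt, hgx⟩ : ∃ p ∈ t, g • x ∈ V p := by
      simpa using ht (mem_univ (g • x))
    have hxW : x ∈ g⁻¹ • V p := by
      rw [Set.mem_smul_set_iff_inv_smul_mem, inv_inv]; exact hgx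
    have hW𝒮 : g⁻¹ • V p ∈ 𝒮 :=
      Set.mem_iUnion₂.2 ⟨p, hpt, MulAction.mem_orbit (V p) g⁻¹⟩
    have hyW : y ∈ g⁻¹ • V p := by
      by_contra hyn
      exact absurd hxy (not_lt.2 (hmar _ hW𝒮 x hxW y hyn))
    have hgy : g • y ∈ V p := by
      rwa [Set.mem_smul_set_iff_inv_smul_mem, inv_inv] at hyW
    have d1 := hVsub p hgx
    have d2 := hVsub p hgy
    rw [mem_ball] at d1 d2
    calc dist (g • x) (g • y) ≤ dist (g • x) p + dist p (g • y) := dist_triangle _ _ _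
      _ < ε := by rw [dist_comm p (g • y)]; linarith
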